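/- Let λ, μ, λ', μ' ∈ gl_2(F) with λμ = μλ and λ'μ' = μ'λ'. If span(λ, μ) = span(λ', μ') as subspaces of gl_2(F), then the Leibniz algebras a(λ,μ) and a(λ',μ') are isomorphic. -/

import Mathlib

lemma key_change {F V : Type*} [Field F] [AddCommGroup V] [Module F V]
    (v1 v2 w1 w2 : V)
    (h : Submodule.span F ({v1, v2} : Set V) = Submodule.span F ({w1, w2} : Set V)) :
    ∃ a b c d : F, a * d - b * c ≠ 0 ∧ v1 = a • w1 + b • w2 ∧ v2 = c • w1 + d • w2 := by
  have hv1 : v1 ∈ Submodule.span F ({w1, w2} : Set V) := by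
    rw [← h]; exact Submodule.subset_span (by simp)
  have hv2 : v2 ∈ Submodule.span F ({w1, w2} : Set V) := by
    rw [← h]; exact Submodule.subset_span (by simp)
  obtain ⟨a, b, hab⟩ := Submodule.mem_span_pair.mp hv1
  obtain ⟨c, d, hcd⟩ := Submodule.mem_span_pair.mp hv2
  by_cases hW : ∀ s t : F, s • w1 + t • w2 = 0 → s = 0 ∧ t = 0
  · -- w1, w2 independent
    have hw1 : w1 ∈ Submodule.span F ({v1, v2} : Set V) := by
      rw [h]; exact Submodule.subset_span (by simp)
    have hw2 : w2 ∈ Submodule.span F ({v1, v2} : Set V) := by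
      rw [h]; exact Submodule.subset_span (by simp)
    obtain ⟨a', b', hab'⟩ := Submodule.mem_span_pair.mp hw1
    obtain ⟨c', d', hcd'⟩ := Submodule.mem_span_pair.mp hw2
    have t1 := hW (a' * a + b' * c - 1) (a' * b + b' * d) (by
      linear_combination (norm := module) a' • hab + b' • hcd + hab')
    have t2 := hW (c' * a + d' * c) (c' * b + d' * d - 1) (by
      linear_combination (norm := module) c' • hab + d' • hcd + hcd')
    have e1 : a' * a + b' * c = 1 := by linear_combination t1.1
    have e2 : a' * b + b' * d = 0 := t1.2
    have e3 : c' * a + d' * c = 0 := t2.1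
    have e4 : c' * b + d' * d = 1 := by linear_combination t2.2
    refine ⟨a, b, c, d, ?_, hab.symm, hcd.symm⟩
    have hdet : (a * d - b * c) * (a' * d' - b' * c') = 1 := by
      linear_combination (c' * b + d' * d) * e1 + e4 - (c' * a + d' * c) * e2
    intro h0
    rw [h0] at hdet
    simp at hdet
  · push_neg at hW
    obtain ⟨s, t, hst, hne⟩ := hW
    by_cases ht : t = 0
    · -- then s ≠ 0 and w1 = 0
      have hs : s ≠ 0 := fun hs0 => hne hs0 ht
      have hw1z : w1 = 0 := by
        have : s • w1 = 0 := by rw [ht] at hst; simpa using hst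
        exact (smul_eq_zero.mp this).resolve_left hs
      by_cases hb : b = 0
      · by_cases hd : d = 0
        · -- v1 = v2 = 0, hence w2 = 0
          have hv1z : v1 = 0 := by rw [← hab, hw1z, hb]; simp
          have hv2z : v2 = 0 := by rw [← hcd, hw1z, hd]; simp
          have hw2m : w2 ∈ Submodule.span F ({v1, v2} : Set V) := by
            rw [h]; exact Submodule.subset_span (by simp)
          rw [hv1z, hv2z] at hw2m
          simp only [Set.insert_eq_self, Set.mem_singleton_iff, Submodule.span_insert_zero,
            Submodule.span_zero_singleton, Submodule.mem_bot] at hw2m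
          refine ⟨1, 0, 0, 1, by norm_num, ?_, ?_⟩ <;>
            simp [hv1z, hv2z, hw1z, hw2m]
        · refine ⟨1, 0, 0, d, by simpa using hd, ?_, ?_⟩
          · rw [← hab, hw1z, hb]; simp
          · rw [← hcd, hw1z]; simp
      · refine ⟨0, b, 1, d, by simpa using hb, ?_, ?_⟩
        · rw [← hab, hw1z]; simp
        · rw [← hcd, hw1z]; simp
    · -- w2 = r • w1
      have hw2 : w2 = (-s / t) • w1 := by
        have h1 : t • w2 = (-s) • w1 := by
          linear_combination (norm := module) hst
        calc w2 = t⁻¹ • (t • w2) := by rw [inv_smul_smul₀ ht]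
          _ = t⁻¹ • ((-s) • w1) := by rw [h1]
          _ = (-s / t) • w1 := by rw [smul_smul, div_eq_inv_mul]
      set r : F := -s / t with hr
      have hv1 : v1 = (a + b * r) • w1 := by
        rw [← hab, hw2]; module
      have hv2 : v2 = (c + d * r) • w1 := by
        rw [← hcd, hw2]; module
      by_cases hp : a + b * r = 0
      · by_cases hq : c + d * r = 0
        · -- v1 = v2 = 0, hence w1 = 0 and w2 = 0
          have hv1z : v1 = 0 := by rw [hv1, hp]; simp
          have hv2z : v2 = 0 := by rw [hv2, hq]; simp
          have hw1m : w1 ∈ Submodule.span F ({v1, v2} : Set V) := by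
            rw [h]; exact Submodule.subset_span (by simp)
          rw [hv1z, hv2z] at hw1m
          simp only [Set.insert_eq_self, Set.mem_singleton_iff, Submodule.span_insert_zero,
            Submodule.span_zero_singleton, Submodule.mem_bot] at hw1m
          refine ⟨1, 0, 0, 1, by norm_num, ?_, ?_⟩ <;>
            simp [hv1z, hv2z, hw1m, hw2]
        · -- (−r, 1, q, 0)
          refine ⟨-r, 1, c + d * r, 0, by intro h0; exact hq (by linear_combination -h0), ?_, ?_⟩
          · rw [hv1, hp, hw2]; module
          · rw [hv2, hw2]; module
      · -- (p, 0, q − r, 1)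
        refine ⟨a + b * r, 0, c + d * r - r, 1, by simpa using hp, ?_, ?_⟩
        · rw [hv1]; simp
        · rw [hv2, hw2]; module

/-- The bracket of the 4-dimensional Leibniz algebra `a(λ,μ)` on coordinates `(a, b, x, y)`. -/
def aBr {F : Type*} [Field F] (lam mu : Matrix (Fin 2) (Fin 2) F) :
    (F × F × F × F) → (F × F × F × F) → (F × F × F × F) :=
  fun u v =>
    (0, 0,
      u.1 * (lam 0 0 * v.2.2.1 + lam 1 0 * v.2.2.2)
        + u.2.1 * (mu 0 0 * v.2.2.1 + mu 1 0 * v.2.2.2),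
      u.1 * (lam 0 1 * v.2.2.1 + lam 1 1 * v.2.2.2)
        + u.2.1 * (mu 0 1 * v.2.2.1 + mu 1 1 * v.2.2.2))

/-- If `span(λ,μ) = span(λ',μ')`, then the Leibniz algebras `a(λ,μ)` and
`a(λ',μ')` are isomorphic. -/
theorem aBr_iso_of_span_eq {F : Type*} [Field F]
    (lam mu lam' mu' : Matrix (Fin 2) (Fin 2) F)
    (hc : lam * mu = mu * lam) (hc' : lam' * mu' = mu' * lam')
    (hspan : Submodule.span F ({lam, mu} : Set (Matrix (Fin 2) (Fin 2) F))
      = Submodule.span F ({lam', mu'} : Set (Matrix (Fin 2) (Fin 2) F))) :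
    ∃ e : (F × F × F × F) ≃ₗ[F] (F × F × F × F),
      ∀ u v : F × F × F × F, e (aBr lam mu u v) = aBr lam' mu' (e u) (e v) := by
  obtain ⟨a, b, c, d, hdet, h1, h2⟩ := key_change lam mu lam' mu' hspan
  have E1 : ∀ i j, lam i j = a * lam' i j + b * mu' i j := by
    intro i j; rw [h1]; simp [Matrix.add_apply]
  have E2 : ∀ i j, mu i j = c * lam' i j + d * mu' i j := by
    intro i j; rw [h2]; simp [Matrix.add_apply]
  refine ⟨{
    toFun := fun u => (a * u.1 + c * u.2.1, b * u.1 + d * u.2.1, u.2.2.1, u.2.2.2),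
    invFun := fun w => ((d * w.1 - c * w.2.1) / (a * d - b * c),
      (a * w.2.1 - b * w.1) / (a * d - b * c), w.2.2.1, w.2.2.2),
    map_add' := by intro u v; ext <;> simp <;> ring,
    map_smul' := by intro m u; ext <;> simp <;> ring,
    left_inv := by intro u; ext <;> simp <;> field_simp [show d * a - c * b ≠ 0 from fun h0 => hdet (by linear_combination h0), show a * d - c * b ≠ 0 from fun h0 => hdet (by linear_combination h0), show -(b * c) + d * a ≠ 0 from fun h0 => hdet (by linear_combination h0), show d * a - b * c ≠ 0 from fun h0 => hdet (by linear_combination h0), hdet] <;> ring,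
    right_inv := by intro w; ext <;> simp <;> field_simp [show d * a - c * b ≠ 0 from fun h0 => hdet (by linear_combination h0), show a * d - c * b ≠ 0 from fun h0 => hdet (by linear_combination h0), show -(b * c) + d * a ≠ 0 from fun h0 => hdet (by linear_combination h0), show d * a - b * c ≠ 0 from fun h0 => hdet (by linear_combination h0), hdet] <;> ring }, ?_⟩
  intro u v
  simp only [aBr, LinearEquiv.coe_mk, LinearMap.coe_mk, AddHom.coe_mk, Prod.mk.injEq]
  refine ⟨by ring, by ring, ?_, ?_⟩
  · linear_combination (u.1 * v.2.2.1) * E1 0 0 + (u.1 * v.2.2.2) * E1 1 0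
      + (u.2.1 * v.2.2.1) * E2 0 0 + (u.2.1 * v.2.2.2) * E2 1 0
  · linear_combination (u.1 * v.2.2.1) * E1 0 1 + (u.1 * v.2.2.2) * E1 1 1
      + (u.2.1 * v.2.2.1) * E2 0 1 + (u.2.1 * v.2.2.2) * E2 1 1
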